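/- arXiv:1810.13221 — 2 statements merged into one kernel-verified Lean document; each statement's English description precedes it below -/
import Mathlib

section
/- Let X be a connected n-manifold and Y a nonempty connected closed (n-1)-dimensional submanifold with Hom(H₁(X), ℤ/2ℤ) = 0. Then for every point y ∈ Y, the set (X \ Y) ∪ {y} is path-connected. -/
open CategoryTheory

/-- The singular chain complex of a topological space, obtained by applying the free abelian
group functor levelwise to the singular simplicial set and taking the alternating face map
complex. -/
noncomputable def singularChainComplexFunctor : TopCat ⥤ ChainComplex AddCommGrpCat ℕ :=
  TopCat.toSSet ⋙ ((SimplicialObject.whiskering _ _).obj AddCommGrpCat.free) ⋙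
    AlgebraicTopology.alternatingFaceMapComplex AddCommGrpCat

/-- The `i`-th singular homology functor (with integer coefficients). -/
noncomputable def singularHomologyFunctor (i : ℕ) : TopCat ⥤ AddCommGrpCat :=
  singularChainComplexFunctor ⋙ HomologicalComplex.homologyFunctor _ _ i

/-- `Y` is a locally flat `(n-1)`-dimensional topological submanifold of `X`: every point of
`Y` admits a chart of `X` (a partial homeomorphism into `ℝⁿ`) in which `Y` corresponds to the
hyperplane where the last coordinate vanishes. -/
def IsTopSubmanifoldOfCodimOne (n : ℕ) (hn : 0 < n) {X : Type*} [TopologicalSpace X]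
    (Y : Set X) : Prop :=
  ∀ y ∈ Y, ∃ φ : OpenPartialHomeomorph X (EuclideanSpace ℝ (Fin n)), y ∈ φ.source ∧
    φ.source ∩ Y = φ.source ∩ φ ⁻¹' {z | z ⟨n - 1, by omega⟩ = 0}


open Set Metric in
/-- Every point of a charted space over Euclidean space has arbitrarily small open
path-connected neighborhoods inside a given open set. -/
lemma exists_pathConnected_nhd {n : ℕ} {X : Type} [TopologicalSpace X]
    [ChartedSpace (EuclideanSpace ℝ (Fin n)) X] {O : Set X} (hO : IsOpen O) {w : X}
    (hw : w ∈ O) : ∃ V : Set X, IsOpen V ∧ w ∈ V ∧ IsPathConnected V ∧ V ⊆ O := by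
  set ψ := chartAt (EuclideanSpace ℝ (Fin n)) w with hψ
  have hws : w ∈ ψ.source := mem_chart_source _ w
  have hopen : IsOpen (ψ.target ∩ ψ.symm ⁻¹' (ψ.source ∩ O)) :=
    ψ.isOpen_inter_preimage_symm (ψ.open_source.inter hO)
  have hmem : ψ w ∈ ψ.target ∩ ψ.symm ⁻¹' (ψ.source ∩ O) := by
    refine ⟨ψ.map_source hws, ?_⟩
    simp only [mem_preimage, ψ.left_inv hws]
    exact ⟨hws, hw⟩
  obtain ⟨ε, hε, hball⟩ := Metric.isOpen_iff.1 hopen _ hmem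
  refine ⟨ψ.source ∩ ψ ⁻¹' ball (ψ w) ε, ψ.isOpen_inter_preimage isOpen_ball,
    ⟨hws, by simp [mem_ball, hε]⟩, ?_, ?_⟩
  · have himg : ψ.source ∩ ψ ⁻¹' ball (ψ w) ε = ψ.symm '' ball (ψ w) ε := by
      apply Subset.antisymm
      · rintro v ⟨hv, hv2⟩
        exact ⟨ψ v, hv2, ψ.left_inv hv⟩
      · rintro _ ⟨z, hz, rfl⟩
        have hzt : z ∈ ψ.target := (hball hz).1
        refine ⟨ψ.map_target hzt, ?_⟩
        simpa [ψ.right_inv hzt] using hz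
    rw [himg]
    exact ((convex_ball _ _).isPathConnected ⟨ψ w, by simp [hε]⟩).image'
      (ψ.symm.continuousOn.mono (fun z hz => (hball hz).1))
  · rintro v ⟨hv, hv2⟩
    have := hball hv2
    rw [mem_inter_iff, mem_preimage, ψ.left_inv hv] at this
    exact this.2.2

set_option maxHeartbeats 1000000 in
open Set Metric in
/-- Key local lemma: if `p ∈ Y` lies in the closure of the path component `C` of a point
`x ∈ Yᶜ`, then (a) a whole neighborhood of `p` inside `Y` lies in the closure of `C`,
and (b) `p` can be joined to `x` inside `Yᶜ ∪ {p}`. -/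
lemma key_local {n : ℕ} (hn : 0 < n) {X : Type} [TopologicalSpace X]
    [ChartedSpace (EuclideanSpace ℝ (Fin n)) X] {Y : Set X}
    (hY : IsTopSubmanifoldOfCodimOne n hn Y) {x : X} (hx : x ∈ Yᶜ)
    {p : X} (hp : p ∈ Y) (hpc : p ∈ closure (pathComponentIn Yᶜ x)) :
    (∃ U ∈ nhds p, ∀ q ∈ U ∩ Y, q ∈ closure (pathComponentIn Yᶜ x)) ∧
      JoinedIn (Yᶜ ∪ {p}) p x := by
  classical
  set C := pathComponentIn Yᶜ x with hCdef
  set i : Fin n := ⟨n - 1, by omega⟩ with hidef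
  obtain ⟨φ, hpsrc, hφY⟩ := hY p hp
  -- coordinate helpers
  have hcoord : ∀ q ∈ φ.source, (q ∈ Y ↔ φ q i = 0) := by
    intro q hq
    constructor
    · intro hqY
      have : q ∈ φ.source ∩ φ ⁻¹' {z | z i = 0} := hφY ▸ ⟨hq, hqY⟩
      exact this.2
    · intro h0
      have : q ∈ φ.source ∩ Y := by
        rw [hφY]; exact ⟨hq, h0⟩
      exact this.2
  -- ball inside the target
  obtain ⟨ε, hε, hball⟩ := Metric.isOpen_iff.1 φ.open_target _ (φ.map_source hpsrc)
  -- pick a point of C in the ε/2-chart-ball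
  have hUopen : IsOpen (φ.source ∩ φ ⁻¹' ball (φ p) (ε / 2)) :=
    φ.isOpen_inter_preimage isOpen_ball
  have hpU : p ∈ φ.source ∩ φ ⁻¹' ball (φ p) (ε / 2) := ⟨hpsrc, by simp [mem_ball]; positivity⟩
  obtain ⟨c, hcU, hcC⟩ := (mem_closure_iff.1 hpc) _ hUopen hpU
  have hcY : c ∉ Y := pathComponentIn_subset hcC
  have hcsrc : c ∈ φ.source := hcU.1
  have hcball : φ c ∈ ball (φ p) (ε / 2) := hcU.2
  have ha : φ c i ≠ 0 := fun h => hcY ((hcoord c hcsrc).2 h)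
  -- the side of c
  set σ : ℝ := if 0 < φ c i then 1 else -1 with hσdef
  have hσa : 0 < σ * φ c i := by
    rcases lt_trichotomy (φ c i) 0 with h | h | h
    · rw [hσdef, if_neg (by linarith)]; nlinarith
    · exact absurd h ha
    · rw [hσdef, if_pos h]; linarith
  have hσcases : σ = 1 ∨ σ = -1 := by
    rw [hσdef]; split <;> simp
  have hσsq : σ * σ = 1 := by rcases hσcases with h | h <;> rw [h] <;> norm_num
  have hσabs : |σ| = 1 := by rcases hσcases with h | h <;> rw [h] <;> norm_num
  -- the convex open piece on the side of c
  set H : Set (EuclideanSpace ℝ (Fin n)) := {z | 0 < σ * z i} with hHdef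
  have hHconv : Convex ℝ H := by
    refine convex_halfSpace_gt ⟨fun z w => ?_, fun t z => ?_⟩ 0
    · show σ * (z + w) i = σ * z i + σ * w i
      simp [PiLp.add_apply]; ring
    · show σ * (t • z) i = t * (σ * z i)
      simp [PiLp.smul_apply, smul_eq_mul]; ring
  set K : Set X := φ.symm '' (ball (φ p) ε ∩ H) with hKdef
  have hKmem : ∀ z ∈ ball (φ p) ε ∩ H, φ.symm z ∈ C := by
    have hKpc : IsPathConnected (ball (φ p) ε ∩ H) :=
      ((convex_ball _ _).inter hHconv).isPathConnected
        ⟨φ c, ball_subset_ball (by linarith) hcball, hσa⟩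
    have hKpc' : IsPathConnected K :=
      hKpc.image' (φ.symm.continuousOn.mono (fun z hz => hball hz.1))
    have hKY : K ⊆ Yᶜ := by
      rintro _ ⟨z, ⟨hz1, hz2⟩, rfl⟩
      intro hmem
      have hzt : z ∈ φ.target := hball hz1
      have h0 : φ (φ.symm z) i = 0 := (hcoord _ (φ.map_target hzt)).1 hmem
      rw [φ.right_inv hzt] at h0
      rw [hHdef, mem_setOf_eq, h0, mul_zero] at hz2
      exact lt_irrefl 0 hz2
    have hcK : c ∈ K :=
      ⟨φ c, ⟨ball_subset_ball (by linarith) hcball, hσa⟩, φ.left_inv hcsrc⟩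
    have : K ⊆ pathComponentIn Yᶜ c := hKpc'.subset_pathComponentIn hcK hKY
    have hcc : pathComponentIn Yᶜ c = C := pathComponentIn_congr hcC
    intro z hz
    exact hcc ▸ this ⟨z, hz, rfl⟩
  constructor
  · -- (a) neighborhood of p in Y lies in closure C
    refine ⟨φ.source ∩ φ ⁻¹' ball (φ p) (ε / 2), hUopen.mem_nhds hpU, ?_⟩
    rintro q ⟨⟨hqsrc, hqball⟩, hqY⟩
    have hq0 : φ q i = 0 := (hcoord q hqsrc).1 hqY
    set e : EuclideanSpace ℝ (Fin n) := EuclideanSpace.single i 1 with hedef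
    have htends : Filter.Tendsto (fun t : ℝ => φ.symm (φ q + (t * σ) • e))
        (nhdsWithin 0 (Ioi 0)) (nhds q) := by
      have h1 : Filter.Tendsto (fun t : ℝ => φ q + (t * σ) • e) (nhds 0) (nhds (φ q)) := by
        have : Continuous (fun t : ℝ => φ q + (t * σ) • e) :=
          continuous_const.add ((continuous_id.mul continuous_const).smul continuous_const)
        simpa using this.tendsto 0
      have h2 : ContinuousAt φ.symm (φ q) := φ.continuousAt_symm (φ.map_source hqsrc)
      have h3 : Filter.Tendsto (fun t : ℝ => φ q + (t * σ) • e)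
          (nhdsWithin 0 (Ioi 0)) (nhds (φ q)) := h1.mono_left nhdsWithin_le_nhds
      have h4 := h2.tendsto.comp h3
      rwa [φ.left_inv hqsrc] at h4
    refine mem_closure_of_tendsto htends ?_
    filter_upwards [Ioo_mem_nhdsGT_of_mem (⟨le_refl _, half_pos hε⟩ : (0:ℝ) ∈ Ico 0 (ε/2))]
      with t ht
    refine hKmem _ ⟨?_, ?_⟩
    · -- in the ε-ball
      have hnorm : ‖(t * σ) • e‖ = t := by
        rw [norm_smul, hedef, EuclideanSpace.norm_single, norm_one, mul_one, Real.norm_eq_abs,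
          abs_mul, hσabs, mul_one, abs_of_pos ht.1]
      calc dist (φ q + (t * σ) • e) (φ p)
          ≤ dist (φ q + (t * σ) • e) (φ q) + dist (φ q) (φ p) := dist_triangle _ _ _
        _ = ‖(t * σ) • e‖ + dist (φ q) (φ p) := by
            congr 1
            rw [dist_eq_norm]; simp
        _ < ε / 2 + ε / 2 := by
            rw [hnorm]; exact add_lt_add ht.2 hqball
        _ = ε := by ring
    · -- on the right side
      show 0 < σ * (φ q + (t * σ) • e) i
      have : (φ q + (t * σ) • e) i = φ q i + (t * σ) * e i := by
        simp [PiLp.add_apply, PiLp.smul_apply, smul_eq_mul]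
      rw [this, hq0, zero_add, hedef, EuclideanSpace.single_apply, if_pos rfl, mul_one]
      have : σ * (t * σ) = t := by rw [mul_comm t σ, ← mul_assoc, hσsq, one_mul]
      rw [this]; exact ht.1
  · -- (b) join p to x within Yᶜ ∪ {p}
    have hp0 : φ p i = 0 := (hcoord p hpsrc).1 hp
    -- the straight segment from φ p to φ c, pulled back
    have hseg : ∀ t : ℝ, 0 ≤ t → t ≤ 1 → φ p + t • (φ c - φ p) ∈ ball (φ p) ε := by
      intro t ht0 ht1
      have hd0 : dist (φ p + t • (φ c - φ p)) (φ p) = ‖t • (φ c - φ p)‖ := by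
        rw [dist_eq_norm]; simp
      rw [mem_ball, hd0, norm_smul, Real.norm_eq_abs, abs_of_nonneg ht0]
      have hd : ‖φ c - φ p‖ < ε / 2 := by
        rw [← dist_eq_norm]; exact hcball
      nlinarith [norm_nonneg (φ c - φ p)]
    have hside : ∀ t : ℝ, 0 < t → t ≤ 1 → φ p + t • (φ c - φ p) ∈ H := by
      intro t ht0 ht1
      show 0 < σ * (φ p + t • (φ c - φ p)) i
      have : (φ p + t • (φ c - φ p)) i = φ p i + t * (φ c i - φ p i) := by
        simp [PiLp.add_apply, PiLp.smul_apply, PiLp.sub_apply, smul_eq_mul]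
      rw [this, hp0, zero_add, sub_zero]
      have : σ * (t * φ c i) = t * (σ * φ c i) := by ring
      rw [this]; positivity
    have hcont : Continuous fun t : unitInterval => φ.symm (φ p + (t : ℝ) • (φ c - φ p)) := by
      apply φ.symm.continuousOn.comp_continuous
      · exact continuous_const.add (continuous_subtype_val.smul continuous_const)
      · intro t
        exact hball (hseg _ t.2.1 t.2.2)
    set γ : Path p c :=
      { toFun := fun t => φ.symm (φ p + (t : ℝ) • (φ c - φ p))
        continuous_toFun := hcont
        source' := by simp [φ.left_inv hpsrc]
        target' := by simp [φ.left_inv hcsrc] }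
    have hγ : JoinedIn (Yᶜ ∪ {p}) p c := by
      refine ⟨γ, fun t => ?_⟩
      rcases eq_or_lt_of_le t.2.1 with h0 | h0
      · right
        show φ.symm (φ p + (t : ℝ) • (φ c - φ p)) ∈ ({p} : Set X)
        rw [← h0]
        simp [φ.left_inv hpsrc]
      · left
        have : φ.symm (φ p + (t : ℝ) • (φ c - φ p)) ∈ C :=
          hKmem _ ⟨hseg _ t.2.1 t.2.2, hside _ h0 t.2.2⟩
        exact pathComponentIn_subset this
    have hcx : JoinedIn (Yᶜ ∪ {p}) c x :=
      (hcC.symm).mono subset_union_left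
    exact hγ.trans hcx

set_option maxHeartbeats 1000000 in
open Set Metric in
/-- Let `X` be a connected `n`-manifold and `Y ⊆ X` a nonempty connected closed
`(n-1)`-dimensional submanifold with `Hom(H₁(X), ℤ/2ℤ) = 0`. Then for every `y ∈ Y` the
set `(X \ Y) ∪ {y}` is path-connected. -/
theorem complement_union_point_isPathConnected
    (n : ℕ) (hn : 0 < n) (X : Type) [TopologicalSpace X]
    [ChartedSpace (EuclideanSpace ℝ (Fin n)) X] [ConnectedSpace X]
    (Y : Set X) (hYclosed : IsClosed Y)
    (hY : IsTopSubmanifoldOfCodimOne n hn Y) (hYconn : IsConnected Y)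
    (hH1 : ∀ f : (singularHomologyFunctor 1).obj (TopCat.of X) →+ ZMod 2, f = 0)
    (y : X) (hy : y ∈ Y) :
    IsPathConnected (Yᶜ ∪ {y}) := by
  have hYo : IsOpen Yᶜ := hYclosed.isOpen_compl
  refine ⟨y, Or.inr rfl, @fun z hz => ?_⟩
  rcases hz with hzY | hzy
  swap
  · rw [Set.mem_singleton_iff] at hzy
    subst hzy
    exact JoinedIn.refl (Or.inr rfl)
  -- main case : z ∈ Yᶜ
  set C := pathComponentIn Yᶜ z with hCdef
  have hzC : z ∈ C := mem_pathComponentIn_self hzY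
  -- C is open
  have hCopen : IsOpen C := by
    rw [isOpen_iff_mem_nhds]
    intro w hw
    obtain ⟨V, hVo, hwV, hVpc, hVY⟩ := exists_pathConnected_nhd (n := n) hYo (pathComponentIn_subset hw)
    refine Filter.mem_of_superset (hVo.mem_nhds hwV) ?_
    have h1 : V ⊆ pathComponentIn Yᶜ w := hVpc.subset_pathComponentIn hwV hVY
    rwa [pathComponentIn_congr hw] at h1
  -- closure C ∩ Yᶜ ⊆ C
  have hclC : closure C ∩ Yᶜ ⊆ C := by
    rintro w ⟨hwcl, hwY⟩
    obtain ⟨V, hVo, hwV, hVpc, hVY⟩ := exists_pathConnected_nhd (n := n) hYo hwY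
    obtain ⟨v, hvV, hvC⟩ := (mem_closure_iff.1 hwcl) _ hVo hwV
    have h1 : V ⊆ pathComponentIn Yᶜ v := hVpc.subset_pathComponentIn hvV hVY
    rw [pathComponentIn_congr hvC] at h1
    exact h1 hwV
  -- closure C meets Y
  have hfr : ∃ p₀, p₀ ∈ closure C ∧ p₀ ∈ Y := by
    by_contra h
    push_neg at h
    have hsub : closure C ⊆ C := by
      intro w hw
      rcases (em (w ∈ Y)) with hwY | hwY
      · exact absurd hwY (h w hw)
      · exact hclC ⟨hw, hwY⟩
    have hclopen : IsClopen C :=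
      ⟨closure_subset_iff_isClosed.1 hsub, hCopen⟩
    have : C = Set.univ := hclopen.eq_univ ⟨z, hzC⟩
    have hyC : y ∈ C := this ▸ Set.mem_univ y
    exact pathComponentIn_subset hyC hy
  obtain ⟨p₀, hp₀cl, hp₀Y⟩ := hfr
  -- the trace of closure C on Y is clopen and nonempty, hence everything
  haveI : PreconnectedSpace Y := Subtype.preconnectedSpace hYconn.isPreconnected
  set B : Set Y := Subtype.val ⁻¹' closure C with hBdef
  have hBclosed : IsClosed B := isClosed_closure.preimage continuous_subtype_val
  have hBopen : IsOpen B := by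
    rw [isOpen_iff_mem_nhds]
    rintro ⟨q, hqY⟩ hqB
    obtain ⟨⟨U, hU, hUsub⟩, -⟩ := key_local hn hY hzY hqY hqB
    refine Filter.mem_of_superset (continuousAt_subtype_val.preimage_mem_nhds hU) ?_
    rintro ⟨q', hq'Y⟩ hq'
    exact hUsub q' ⟨hq', hq'Y⟩
  have hBuniv : B = Set.univ :=
    IsClopen.eq_univ ⟨hBclosed, hBopen⟩ ⟨⟨p₀, hp₀Y⟩, hp₀cl⟩
  have hycl : y ∈ closure C := by
    have : (⟨y, hy⟩ : Y) ∈ B := hBuniv ▸ Set.mem_univ _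
    exact this
  obtain ⟨-, hjoin⟩ := key_local hn hY hzY hy hycl
  exact hjoin.mono (Set.union_subset_union_right _ (by simp))
end

section
/- Given an inverse sequence of abelian groups (A_i) that is a,d-injective and a,b-surjective, then for every c ≥ a the natural map from the inverse limit lim← A_i to the image of the map A_{c+b} → A_c (sending a compatible sequence (x_i) to x_c) is a group isomorphism. -/
open CategoryTheory Opposite

/-- The transition map from level `j` to level `i` (for `i ≤ j`) of an inverse system of
abelian groups indexed by `ℕ`. -/
noncomputable def InvSys.trans (F : ℕᵒᵖ ⥤ AddCommGrpCat) {i j : ℕ} (h : i ≤ j) :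
    F.obj (op j) → F.obj (op i) :=
  F.map (homOfLE h).op

/-- `a,b`-injectivity of an inverse system of abelian groups. -/
def InvSys.IsInjective (F : ℕᵒᵖ ⥤ AddCommGrpCat) (a b : ℕ) : Prop :=
  ∀ c (_ : a ≤ c), ∀ x : F.obj (op (b + c)),
    InvSys.trans F (by omega : a ≤ b + c) x = 0 →
    InvSys.trans F (by omega : c ≤ b + c) x = 0

/-- `a,b`-surjectivity of an inverse system of abelian groups. -/
def InvSys.IsSurjective (F : ℕᵒᵖ ⥤ AddCommGrpCat) (a b : ℕ) : Prop :=
  ∀ c (_ : a ≤ c), ∀ x : F.obj (op c),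
    (∃ y : F.obj (op (b + c)), InvSys.trans F (by omega : c ≤ b + c) y = x) →
    ∀ d (_ : c ≤ d), ∃ z : F.obj (op d), InvSys.trans F (by omega : c ≤ d) z = x

/-- The inverse limit `lim← A_i` of an inverse sequence of abelian groups, realized as the
subgroup of the product consisting of compatible sequences. -/
noncomputable def InvSys.invLim (F : ℕᵒᵖ ⥤ AddCommGrpCat) :
    AddSubgroup (Π i : ℕ, F.obj (op i)) where
  carrier := {x | ∀ i : ℕ, F.map (homOfLE (Nat.le_succ i)).op (x (i + 1)) = x i}
  zero_mem' := by intro i; simp [map_zero]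
  add_mem' := by intro x y hx hy i; simp [map_add, hx i, hy i]
  neg_mem' := by intro x hx i; simp [map_neg, hx i]

/-- The natural map from the inverse limit to the `c`-th group, sending a compatible
sequence `(x_i)` to `x_c`. -/
noncomputable def InvSys.natMap (F : ℕᵒᵖ ⥤ AddCommGrpCat) (c : ℕ) :
    InvSys.invLim F →+ F.obj (op c) :=
  (Pi.evalAddMonoidHom (fun i : ℕ => F.obj (op i)) c).comp (InvSys.invLim F).subtype

theorem InvSys.trans_comp (F : ℕᵒᵖ ⥤ AddCommGrpCat) {i j k : ℕ} (hij : i ≤ j) (hjk : j ≤ k)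
    (x : F.obj (op k)) :
    InvSys.trans F hij (InvSys.trans F hjk x) = InvSys.trans F (hij.trans hjk) x := by
  show (F.map _ ≫ F.map _) x = _
  rw [← F.map_comp]
  rfl

theorem InvSys.trans_refl (F : ℕᵒᵖ ⥤ AddCommGrpCat) {i : ℕ} (x : F.obj (op i)) :
    InvSys.trans F (le_refl i) x = x := by
  show F.map (𝟙 _) x = x
  rw [F.map_id]; rfl

theorem InvSys.compat (F : ℕᵒᵖ ⥤ AddCommGrpCat) {x : Π i : ℕ, F.obj (op i)}
    (hx : x ∈ InvSys.invLim F) {i j : ℕ} (h : i ≤ j) :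
    InvSys.trans F h (x j) = x i := by
  induction j, h using Nat.le_induction with
  | base => exact InvSys.trans_refl F _
  | succ j hij ih =>
      have h1 : InvSys.trans F (Nat.le_succ j) (x (j + 1)) = x j := hx j
      have h2 := InvSys.trans_comp F hij (Nat.le_succ j) (x (j + 1))
      rw [h1, ih] at h2
      exact h2.symm

/-- If an inverse sequence of abelian groups is `a,d`-injective and `a,b`-surjective, then
for every `c ≥ a` the natural map from the inverse limit to the image of `A_{c+b} → A_c`
is a group isomorphism, i.e. it is injective and its range is exactly that image. -/
theorem invLim_natMap_bijective_onto_image (F : ℕᵒᵖ ⥤ AddCommGrpCat) (a b d : ℕ)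
    (hinj : InvSys.IsInjective F a d) (hsurj : InvSys.IsSurjective F a b)
    (c : ℕ) (hc : a ≤ c) :
    Function.Injective (InvSys.natMap F c) ∧
      Set.range (InvSys.natMap F c) =
        Set.range (InvSys.trans F (by omega : c ≤ b + c)) := by
  constructor
  · -- injectivity
    rw [injective_iff_map_eq_zero]
    rintro ⟨s, hs⟩ h0
    have hsc : s c = 0 := h0
    have hsa : s a = 0 := by
      rw [← InvSys.compat F hs hc, hsc]; exact map_zero _
    ext i
    show s i = 0
    set e := max a i with he
    have hse : s e = 0 := by
      have h1 : InvSys.trans F (by omega : a ≤ d + e) (s (d + e)) = 0 := by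
        rw [InvSys.compat F hs (by omega : a ≤ d + e), hsa]
      have h2 := hinj e (le_max_left a i) (s (d + e)) h1
      rw [InvSys.compat F hs (by omega : e ≤ d + e)] at h2
      exact h2
    rw [← InvSys.compat F hs (le_max_right a i : i ≤ e), hse]
    exact map_zero _
  · -- range equality
    ext x
    constructor
    · rintro ⟨⟨s, hs⟩, rfl⟩
      exact ⟨s (b + c), InvSys.compat F hs (by omega : c ≤ b + c)⟩
    · rintro ⟨y, rfl⟩
      set x := InvSys.trans F (by omega : c ≤ b + c) y with hxdef
      have step : ∀ n : ℕ, ∀ z : F.obj (op (c + n)),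
          (∃ w : F.obj (op (b + (c + n))), InvSys.trans F (by omega) w = z) →
          ∃ z' : F.obj (op (c + (n + 1))),
            (∃ w' : F.obj (op (b + (c + (n + 1)))), InvSys.trans F (by omega) w' = z') ∧
            InvSys.trans F (by omega : c + n ≤ c + (n + 1)) z' = z := by
        intro n z hz
        obtain ⟨w', hw'⟩ := hsurj (c + n) (by omega) z hz (b + (c + (n + 1))) (by omega)
        refine ⟨InvSys.trans F (by omega : c + (n + 1) ≤ b + (c + (n + 1))) w', ⟨w', rfl⟩, ?_⟩
        rw [InvSys.trans_comp]
        exact hw'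
      let g : (n : ℕ) → {z : F.obj (op (c + n)) //
          ∃ w : F.obj (op (b + (c + n))), InvSys.trans F (by omega) w = z} :=
        fun n => Nat.rec (⟨x, y, hxdef.symm⟩) (fun n p =>
          ⟨(step n p.1 p.2).choose, (step n p.1 p.2).choose_spec.1⟩) n
      have gstep : ∀ n : ℕ,
          InvSys.trans F (by omega : c + n ≤ c + (n + 1)) (g (n + 1)).1 = (g n).1 :=
        fun n => (step n (g n).1 (g n).2).choose_spec.2
      have gcast : ∀ {m n : ℕ} (_ : m = n) {j : ℕ} (hm : j ≤ c + m) (hn : j ≤ c + n),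
          InvSys.trans F hm (g m).1 = InvSys.trans F hn (g n).1 := by
        intro m n h j hm hn
        subst h
        rfl
      let s : Π i : ℕ, F.obj (op i) :=
        fun i => InvSys.trans F (by omega : i ≤ c + (i - c)) (g (i - c)).1
      have hs : s ∈ InvSys.invLim F := by
        intro i
        show InvSys.trans F (Nat.le_succ i)
            (InvSys.trans F (by omega : i + 1 ≤ c + ((i + 1) - c)) (g ((i + 1) - c)).1)
            = InvSys.trans F (by omega : i ≤ c + (i - c)) (g (i - c)).1
        rw [InvSys.trans_comp]
        by_cases hi : c ≤ i
        · have hic : (i + 1) - c = (i - c) + 1 := by omega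
          have comp := InvSys.trans_comp F (by omega : i ≤ c + (i - c))
            (by omega : c + (i - c) ≤ c + ((i - c) + 1)) (g ((i - c) + 1)).1
          rw [gstep (i - c)] at comp
          exact (gcast hic _ (by omega : i ≤ c + ((i - c) + 1))).trans comp.symm
        · have h1 : (i + 1) - c = 0 := by omega
          have h0 : i - c = 0 := by omega
          exact (gcast h1 _ (by omega : i ≤ c + 0)).trans (gcast h0.symm _ _)
      refine ⟨⟨s, hs⟩, ?_⟩
      show s c = x
      have hcc : c - c = 0 := by omega
      show InvSys.trans F (by omega) (g (c - c)).1 = x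
      calc InvSys.trans F (by omega) (g (c - c)).1
          = InvSys.trans F (le_refl c) (g 0).1 := gcast hcc _ _
        _ = (g 0).1 := InvSys.trans_refl F _
        _ = x := rfl
end
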